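/- Let f : X → Y be a map between metric spaces such that (1) f maps bounded sets to bounded sets, and (2) for all subsets A, B ⊆ X, if A and B are not coarsely disjoint then f(A) and f(B) are not coarsely disjoint. Then f is a coarse map (i.e., coarsely uniform and coarsely proper). -/

import Mathlib

open Set Bornology Metric

/-- `E ⊆ X × X` is an entourage if `sup_{(x,y) ∈ E} d(x,y) < ∞`. -/
def IsEnt {X : Type*} [PseudoMetricSpace X] (E : Set (X × X)) : Prop :=
  ∃ C : ℝ, ∀ p ∈ E, dist p.1 p.2 ≤ C

/-- `E[A] = {y : ∃ a ∈ A, (a,y) ∈ E}`. -/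
def entImg {X : Type*} [PseudoMetricSpace X] (E : Set (X × X)) (A : Set X) : Set X :=
  {y | ∃ a ∈ A, (a, y) ∈ E}

/-- `A` and `B` are not coarsely disjoint: some entourage `E` has `E[A] ∩ E[B]` unbounded. -/
def NotCD {X : Type*} [PseudoMetricSpace X] (A B : Set X) : Prop :=
  ∃ E : Set (X × X), IsEnt E ∧ ¬ IsBounded (entImg E A ∩ entImg E B)

/-- `A` and `B` are coarsely disjoint: every entourage `E` has `E[A] ∩ E[B]` bounded. -/
def CD {X : Type*} [PseudoMetricSpace X] (A B : Set X) : Prop :=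
  ∀ E : Set (X × X), IsEnt E → IsBounded (entImg E A ∩ entImg E B)

/-- Coarsely uniform: `f × f` maps entourages to entourages. -/
def CUnif {X Y : Type*} [PseudoMetricSpace X] [PseudoMetricSpace Y] (f : X → Y) : Prop :=
  ∀ E : Set (X × X), IsEnt E → IsEnt ((fun p : X × X => (f p.1, f p.2)) '' E)

/-- Coarsely proper: preimages of bounded sets are bounded. -/
def CProper {X Y : Type*} [PseudoMetricSpace X] [PseudoMetricSpace Y] (f : X → Y) : Prop :=
  ∀ B : Set Y, IsBounded B → IsBounded (f ⁻¹' B)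

/-- A coarse map is coarsely uniform and coarsely proper. -/
def Coarse {X Y : Type*} [PseudoMetricSpace X] [PseudoMetricSpace Y] (f : X → Y) : Prop :=
  CUnif f ∧ CProper f

/-- Coarsely injective: `(f × f)⁻¹` of any entourage is an entourage. -/
def CInj {X Y : Type*} [PseudoMetricSpace X] [PseudoMetricSpace Y] (f : X → Y) : Prop :=
  ∀ F : Set (Y × Y), IsEnt F → IsEnt ((fun p : X × X => (f p.1, f p.2)) ⁻¹' F)

/-- A coarse ultrafilter on a metric space. -/
structure CUF (X : Type*) [PseudoMetricSpace X] where
  sets : Set (Set X)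
  pairClose : ∀ A ∈ sets, ∀ B ∈ sets, NotCD A B
  split : ∀ A B : Set X, A ∪ B ∈ sets → A ∈ sets ∨ B ∈ sets
  univ_mem : Set.univ ∈ sets

/-- Pushforward system of sets of a coarse ultrafilter along a map. -/
def push {X Y : Type*} [PseudoMetricSpace X] [PseudoMetricSpace Y] (f : X → Y) (F : CUF X) :
    Set (Set Y) :=
  {A : Set Y | f ⁻¹' A ∈ F.sets}

/-- Asymptotically alike coarse ultrafilters. -/
def AAlike {X : Type*} [PseudoMetricSpace X] (F G : CUF X) : Prop :=
  ∀ A ∈ F.sets, ∀ B ∈ G.sets, NotCD A B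

/-- Asymptotically alike, on raw systems of subsets. -/
def AAlikeS {X : Type*} [PseudoMetricSpace X] (S T : Set (Set X)) : Prop :=
  ∀ A ∈ S, ∀ B ∈ T, NotCD A B

lemma isBounded_entImg {Y : Type*} [MetricSpace Y] {F : Set (Y × Y)} (hF : IsEnt F)
    {S : Set Y} (hS : IsBounded S) : IsBounded (entImg F S) := by
  obtain ⟨D, hD⟩ := hF
  rcases (entImg F S).eq_empty_or_nonempty with h | ⟨z0, s0, hs0, hs0F⟩
  · rw [h]; exact isBounded_empty
  obtain ⟨r, hr⟩ := hS.subset_closedBall s0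
  refine (isBounded_closedBall (x := s0) (r := D + r)).subset ?_
  rintro z ⟨s, hsS, hsF⟩
  have h1 : dist s s0 ≤ r := hr hsS
  have h2 : dist s z ≤ D := hD _ hsF
  have h3 : dist z s0 ≤ dist z s + dist s s0 := dist_triangle _ _ _
  have h4 : dist z s = dist s z := dist_comm _ _
  simp only [mem_closedBall]
  linarith

lemma notCD_elim {Y : Type*} [MetricSpace Y] {S T : Set Y} (h : NotCD S T)
    (hS : IsBounded S) : False := by
  obtain ⟨F, hF, hub⟩ := h
  exact hub ((isBounded_entImg hF hS).subset inter_subset_left)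

lemma seq_lemma {X Y : Type*} [MetricSpace X] [MetricSpace Y] (f : X → Y)
    (h1 : ∀ B : Set X, IsBounded B → IsBounded (f '' B))
    (h2 : ∀ A B : Set X, NotCD A B → NotCD (f '' A) (f '' B))
    (x y : ℕ → X) (C : ℝ) (hC : 0 ≤ C)
    (hxy : ∀ n, dist (x n) (y n) ≤ C)
    (hd : ∀ n : ℕ, (n : ℝ) < dist (f (x n)) (f (y n)))
    (T : Set ℕ) (hT : T.Infinite) (hbdd : IsBounded (f '' (x '' T))) : False := by
  -- f '' (y '' T) is unbounded
  have hyu : ¬ IsBounded (f '' (y '' T)) := by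
    intro h
    obtain ⟨K, hK⟩ := isBounded_iff.1 (hbdd.union h)
    obtain ⟨n, hnT, hn⟩ := hT.exists_gt ⌈K⌉₊
    have hK1 : dist (f (x n)) (f (y n)) ≤ K :=
      hK (Or.inl ⟨x n, ⟨n, hnT, rfl⟩, rfl⟩) (Or.inr ⟨y n, ⟨n, hnT, rfl⟩, rfl⟩)
    have h2' := hd n
    have h3 : (⌈K⌉₊ : ℝ) < n := by exact_mod_cast hn
    have h4 : K ≤ (⌈K⌉₊ : ℝ) := Nat.le_ceil K
    linarith
  have hyB : ¬ IsBounded (y '' T) := fun h => hyu (h1 _ h)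
  have hsub : y '' T ⊆ entImg {p : X × X | dist p.1 p.2 ≤ C} (x '' T) ∩
      entImg {p : X × X | dist p.1 p.2 ≤ C} (y '' T) := by
    rintro _ ⟨n, hnT, rfl⟩
    exact ⟨⟨x n, ⟨n, hnT, rfl⟩, hxy n⟩, ⟨y n, ⟨n, hnT, rfl⟩, by simpa using hC⟩⟩
  have hNot : NotCD (x '' T) (y '' T) :=
    ⟨{p : X × X | dist p.1 p.2 ≤ C}, ⟨C, fun p hp => hp⟩,
      fun hb => hyB (hb.subset hsub)⟩
  exact notCD_elim (h2 _ _ hNot) hbdd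

lemma exists_escape {Y : Type*} [MetricSpace Y] (u v : ℕ → Y) (q : Y)
    (hdm : ∀ m : ℕ, (m : ℝ) < dist (u m) (v m))
    (hesc : ∀ (R : ℝ) (k : ℕ), ∃ m, k ≤ m ∧ R < dist (u m) q ∧ R < dist (v m) q) :
    ∃ n : ℕ → ℕ, (∀ j : ℕ, 2 * ((j : ℝ) + 1) ≤ dist (u (n (j + 1))) q) ∧
      (∀ i j : ℕ, 2 * ((min i j : ℕ) : ℝ) ≤ dist (u (n i)) (v (n j))) := by
  choose pk hk1 hk2 hk3 using hesc
  let step : ℕ → ℕ × ℝ → ℕ × ℝ := fun j p =>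
    (pk (p.2 + 2 * ((j : ℝ) + 1)) (2 * (j + 2)),
     p.2 + dist (u (pk (p.2 + 2 * ((j : ℝ) + 1)) (2 * (j + 2)))) q
         + dist (v (pk (p.2 + 2 * ((j : ℝ) + 1)) (2 * (j + 2)))) q)
  let s : ℕ → ℕ × ℝ := fun j =>
    Nat.rec (motive := fun _ => ℕ × ℝ) (0, dist (u 0) q + dist (v 0) q) (fun j p => step j p) j
  let n : ℕ → ℕ := fun j => (s j).1
  let S : ℕ → ℝ := fun j => (s j).2
  have hrecn : ∀ j, n (j + 1) = pk (S j + 2 * ((j : ℝ) + 1)) (2 * (j + 2)) := fun j => rfl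
  have hrecS : ∀ j, S (j + 1) = S j + dist (u (n (j + 1))) q + dist (v (n (j + 1))) q :=
    fun j => rfl
  have hub1 : ∀ j, S j + 2 * ((j : ℝ) + 1) < dist (u (n (j + 1))) q := by
    intro j; rw [hrecn]; exact hk2 _ _
  have hub2 : ∀ j, S j + 2 * ((j : ℝ) + 1) < dist (v (n (j + 1))) q := by
    intro j; rw [hrecn]; exact hk3 _ _
  have hnlb : ∀ j : ℕ, 2 * (j + 2) ≤ n (j + 1) := by
    intro j; rw [hrecn]; exact hk1 _ _
  have hS0 : ∀ j, 0 ≤ S j := by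
    intro j
    induction j with
    | zero =>
      have : S 0 = dist (u 0) q + dist (v 0) q := rfl
      rw [this]; positivity
    | succ j ih =>
      rw [hrecS]
      have := dist_nonneg (x := u (n (j + 1))) (y := q)
      have := dist_nonneg (x := v (n (j + 1))) (y := q)
      linarith
  have hinv : ∀ j, ∀ i, i ≤ j → dist (u (n i)) q ≤ S j ∧ dist (v (n i)) q ≤ S j := by
    intro j
    induction j with
    | zero =>
      intro i hi
      rw [Nat.le_zero] at hi; subst hi
      have h0 : S 0 = dist (u (n 0)) q + dist (v (n 0)) q := rfl
      have := dist_nonneg (x := u (n 0)) (y := q)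
      have := dist_nonneg (x := v (n 0)) (y := q)
      constructor <;> (rw [h0]; linarith)
    | succ j ih =>
      intro i hi
      have h2 := dist_nonneg (x := u (n (j + 1))) (y := q)
      have h3 := dist_nonneg (x := v (n (j + 1))) (y := q)
      rcases eq_or_lt_of_le hi with rfl | h
      · rw [hrecS]
        constructor <;> linarith [hS0 j]
      · obtain ⟨h4, h5⟩ := ih i (Nat.lt_succ_iff.mp h)
        rw [hrecS]
        constructor <;> linarith
  refine ⟨n, fun j => by linarith [hub1 j, hS0 j], ?_⟩
  intro i j
  rcases lt_trichotomy i j with h | rfl | h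
  · obtain ⟨k, rfl⟩ := Nat.exists_eq_succ_of_ne_zero (Nat.zero_lt_of_lt h).ne'
    have hik : i ≤ k := Nat.lt_succ_iff.mp h
    have hb := hub2 k
    have h4 := (hinv k i hik).1
    have tri : dist (v (n (k + 1))) q ≤ dist (v (n (k + 1))) (u (n i)) + dist (u (n i)) q :=
        dist_triangle _ _ _
    have hc : dist (u (n i)) (v (n (k + 1))) = dist (v (n (k + 1))) (u (n i)) := dist_comm _ _
    have hm : min i (k + 1) = i := min_eq_left h.le
    rw [hm, hc]
    have hik' : (i : ℝ) ≤ k := by exact_mod_cast hik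
    linarith
  · rcases Nat.eq_zero_or_pos i with rfl | hp
    · simpa using dist_nonneg
    · obtain ⟨k, rfl⟩ := Nat.exists_eq_succ_of_ne_zero hp.ne'
      have hd' := hdm (n (k + 1))
      have hl : ((2 * (k + 2) : ℕ) : ℝ) ≤ (n (k + 1) : ℝ) := by exact_mod_cast hnlb k
      rw [min_self]
      push_cast at hl ⊢
      linarith
  · obtain ⟨k, rfl⟩ := Nat.exists_eq_succ_of_ne_zero (Nat.zero_lt_of_lt h).ne'
    have hjk : j ≤ k := Nat.lt_succ_iff.mp h
    have hb := hub1 k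
    have h4 := (hinv k j hjk).2
    have tri : dist (u (n (k + 1))) q ≤ dist (u (n (k + 1))) (v (n j)) + dist (v (n j)) q :=
      dist_triangle _ _ _
    have hm : min (k + 1) j = j := min_eq_right h.le
    rw [hm]
    have hjk' : (j : ℝ) ≤ k := by exact_mod_cast hjk
    linarith

/-- a map sending bounded sets to bounded sets and preserving the
"not coarsely disjoint" relation is a coarse map. -/
theorem stmt0 {X Y : Type*} [MetricSpace X] [MetricSpace Y] (f : X → Y)
    (h1 : ∀ B : Set X, IsBounded B → IsBounded (f '' B))
    (h2 : ∀ A B : Set X, NotCD A B → NotCD (f '' A) (f '' B)) :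
    Coarse f := by
  constructor
  · -- coarsely uniform
    intro E hE
    by_contra hne
    obtain ⟨C0, hC0⟩ := hE
    unfold IsEnt at hne
    push_neg at hne
    have key : ∀ m : ℕ, ∃ p : X × X, p ∈ E ∧ (m : ℝ) < dist (f p.1) (f p.2) := by
      intro m
      obtain ⟨p, ⟨r, hrE, hrp⟩, hlt⟩ := hne (m : ℝ)
      exact ⟨r, hrE, by rw [← hrp] at hlt; exact hlt⟩
    choose g hgE hgd using key
    set x : ℕ → X := fun m => (g m).1 with hx
    set y : ℕ → X := fun m => (g m).2 with hy
    have hxy : ∀ m, dist (x m) (y m) ≤ max C0 0 :=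
      fun m => le_trans (hC0 (g m) (hgE m)) (le_max_left _ _)
    have hd : ∀ m : ℕ, (m : ℝ) < dist (f (x m)) (f (y m)) := hgd
    set q : Y := f (x 0) with hq
    by_cases hbx : ∃ R, {m | dist (f (x m)) q ≤ R}.Infinite
    · obtain ⟨R, hR⟩ := hbx
      refine seq_lemma f h1 h2 x y (max C0 0) (le_max_right _ _) hxy hd _ hR ?_
      refine (isBounded_closedBall (x := q) (r := R)).subset ?_
      rintro _ ⟨_, ⟨m, hm, rfl⟩, rfl⟩
      exact hm
    by_cases hby : ∃ R, {m | dist (f (y m)) q ≤ R}.Infinite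
    · obtain ⟨R, hR⟩ := hby
      refine seq_lemma f h1 h2 y x (max C0 0) (le_max_right _ _)
        (fun m => by rw [dist_comm]; exact hxy m)
        (fun m => by rw [dist_comm]; exact hd m) _ hR ?_
      refine (isBounded_closedBall (x := q) (r := R)).subset ?_
      rintro _ ⟨_, ⟨m, hm, rfl⟩, rfl⟩
      exact hm
    push_neg at hbx hby
    have hesc : ∀ (R : ℝ) (k : ℕ), ∃ m, k ≤ m ∧ R < dist (f (x m)) q ∧ R < dist (f (y m)) q := by
      intro R k
      have hfin : ({m | dist (f (x m)) q ≤ R} ∪ {m | dist (f (y m)) q ≤ R}).Finite :=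
        (hbx R).union (hby R)
      obtain ⟨m, hm, hk⟩ := hfin.infinite_compl.exists_gt k
      simp only [mem_compl_iff, mem_union, mem_setOf_eq, not_or, not_le] at hm
      exact ⟨m, hk.le, hm.1, hm.2⟩
    obtain ⟨n, hesc1, hmin⟩ := exists_escape (fun m => f (x m)) (fun m => f (y m)) q hd hesc
    set A : Set X := Set.range (fun j => x (n j)) with hA
    set B : Set X := Set.range (fun j => y (n j)) with hB
    have hAub : ¬ IsBounded A := by
      intro hAb
      obtain ⟨r, hr⟩ := (h1 A hAb).subset_closedBall q
      have h5 : dist (f (x (n (⌈r⌉₊ + 1)))) q ≤ r :=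
        hr ⟨x (n (⌈r⌉₊ + 1)), ⟨⌈r⌉₊ + 1, rfl⟩, rfl⟩
      have h6 := hesc1 ⌈r⌉₊
      have h7 : r ≤ (⌈r⌉₊ : ℝ) := Nat.le_ceil r
      linarith
    have hNot : NotCD A B := by
      refine ⟨{p : X × X | dist p.1 p.2 ≤ max C0 0}, ⟨max C0 0, fun p hp => hp⟩,
        fun hb => hAub (hb.subset ?_)⟩
      rintro _ ⟨j, rfl⟩
      refine ⟨⟨x (n j), ⟨j, rfl⟩, ?_⟩, ⟨y (n j), ⟨j, rfl⟩, ?_⟩⟩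
      · show dist (x (n j)) (x (n j)) ≤ max C0 0
        simp
      · show dist (y (n j)) (x (n j)) ≤ max C0 0
        rw [dist_comm]; exact hxy (n j)
    obtain ⟨F, hF, hFub⟩ := h2 A B hNot
    obtain ⟨D, hD⟩ := hF
    apply hFub
    set D' := max D 0 with hD'
    set N := ⌈D'⌉₊ with hN
    have hbig : IsBounded (⋃ k ∈ Set.Iic N,
        (closedBall (f (x (n k))) D' ∪ closedBall (f (y (n k))) D')) :=
      (isBounded_biUnion (Set.finite_Iic N)).2 (fun k _ =>
        isBounded_closedBall.union isBounded_closedBall)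
    refine hbig.subset ?_
    rintro z ⟨⟨a, haA, haF⟩, ⟨b, hbB, hbF⟩⟩
    rw [hA] at haA; rw [hB] at hbB
    obtain ⟨_, ⟨i, rfl⟩, rfl⟩ := haA
    obtain ⟨_, ⟨j, rfl⟩, rfl⟩ := hbB
    have ha : dist (f (x (n i))) z ≤ D := hD _ haF
    have hb : dist (f (y (n j))) z ≤ D := hD _ hbF
    have tri : dist (f (x (n i))) (f (y (n j))) ≤
        dist (f (x (n i))) z + dist z (f (y (n j))) := dist_triangle _ _ _
    have hzb : dist z (f (y (n j))) = dist (f (y (n j))) z := dist_comm _ _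
    have hm := hmin i j
    have hDle : D ≤ D' := le_max_left _ _
    have hDD : ((min i j : ℕ) : ℝ) ≤ D' := by linarith
    have hmN : min i j ≤ N := by
      have h8 : D' ≤ (N : ℝ) := Nat.le_ceil D'
      exact_mod_cast hDD.trans h8
    have haD' : dist z (f (x (n i))) ≤ D' := by rw [dist_comm]; exact ha.trans hDle
    have hbD' : dist z (f (y (n j))) ≤ D' := by rw [dist_comm]; exact hb.trans hDle
    rcases le_total i j with hij | hij
    · have hiN : i ∈ Set.Iic N := by rw [mem_Iic]; rwa [min_eq_left hij] at hmN
      exact mem_biUnion hiN (Set.mem_union_left _ (mem_closedBall.mpr haD'))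
    · have hjN : j ∈ Set.Iic N := by rw [mem_Iic]; rwa [min_eq_right hij] at hmN
      exact mem_biUnion hjN (Set.mem_union_right _ (mem_closedBall.mpr hbD'))
  · -- coarsely proper
    intro B hB
    by_contra hub
    have himg : ∀ A : Set X, entImg {p : X × X | p.1 = p.2} A = A := by
      intro A; ext z; simp [entImg]
    have hdiag : NotCD (f ⁻¹' B) (f ⁻¹' B) := by
      refine ⟨{p : X × X | p.1 = p.2}, ⟨0, fun p hp => ?_⟩, ?_⟩
      · simp only [mem_setOf_eq] at hp; rw [hp, dist_self]
      · rw [himg, inter_self]; exact hub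
    exact notCD_elim (h2 _ _ hdiag) (hB.subset (image_preimage_subset f B))
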